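/- Let M be a manifold with an almost quadratic φ-structure (φ,η,ξ) satisfying φ² = pφ + q(I − η⊗ξ). Let h̃ be any Riemannian metric, define h(X,Y) = h̃(φ²X, φ²Y) + η(X)η(Y), and g(X,Y) = (1/(α+δ))[α h(X,Y) + β h(φX,φY) + (γ/2)(h(φX,Y)+h(X,φY)) + δ η(X)η(Y)], where α,β,γ,δ are nonzero constants with βq = pγ/2 + α and α+δ ≠ 0 (and g positive definite). Then g(φX,φY) = p·g(φX,Y) + q·(g(X,Y) − η(X)η(Y)) for all X,Y. -/
import Mathlib


/-- Every manifold with an almost quadratic φ-structure `(φ,η,ξ)`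
(`φξ = 0`, `η(ξ) = 1`, `η∘φ = 0`, `φ² = pφ + q(I − η⊗ξ)`, `q ≠ 0`) admits an associated
Riemannian metric: for any Riemannian metric `h̃`, setting
`h(X,Y) = h̃(φ²X, φ²Y) + η(X)η(Y)` and
`g(X,Y) = (1/(α+δ))[α h(X,Y) + β h(φX,φY) + (γ/2)(h(φX,Y)+h(X,φY)) + δ η(X)η(Y)]`
with nonzero constants `α,β,γ,δ` satisfying `βq = pγ/2 + α`, `α+δ ≠ 0` (and `g`
positive definite), one gets `g(φX,φY) = p·g(φX,Y) + q·(g(X,Y) − η(X)η(Y))`. -/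
theorem associated_metric_exists
    {V : Type*} [AddCommGroup V] [Module ℝ V]
    (htilde : V →ₗ[ℝ] V →ₗ[ℝ] ℝ)
    (hhsym : ∀ X Y, htilde X Y = htilde Y X)
    (hhpos : ∀ X, X ≠ 0 → 0 < htilde X X)
    (φ : V →ₗ[ℝ] V) (η : V →ₗ[ℝ] ℝ) (ξ : V) (p q : ℝ) (hq : q ≠ 0)
    (hφξ : φ ξ = 0) (hηξ : η ξ = 1) (hηφ : ∀ X, η (φ X) = 0)
    (hφ2 : ∀ X, φ (φ X) = p • φ X + q • (X - η X • ξ))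
    (α β γ δ : ℝ) (hα : α ≠ 0) (hβ : β ≠ 0) (hγ : γ ≠ 0) (hδ : δ ≠ 0)
    (hconst : β * q = p * (γ / 2) + α) (hαδ : α + δ ≠ 0)
    (h : V → V → ℝ)
    (hh : ∀ X Y, h X Y = htilde (φ (φ X)) (φ (φ Y)) + η X * η Y)
    (g : V → V → ℝ)
    (hg : ∀ X Y, g X Y = (1 / (α + δ)) *
      (α * h X Y + β * h (φ X) (φ Y) + (γ / 2) * (h (φ X) Y + h X (φ Y)) + δ * (η X * η Y)))
    (hgpos : ∀ X, X ≠ 0 → 0 < g X X) :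
    ∀ X Y, g (φ X) (φ Y) = p * g (φ X) Y + q * (g X Y - η X * η Y) := by
  have hφ3 : ∀ Z, φ (φ (φ Z)) = p • φ (φ Z) + q • φ Z := by
    intro Z
    have := hφ2 (φ Z)
    simpa [hηφ] using this
  have hηφ2 : ∀ Z, η (φ (φ Z)) = 0 := by
    intro Z; rw [hφ2]; simp [hηφ, hηξ]
  have hφ4 : ∀ Z, φ (φ (φ (φ Z))) = (p ^ 2 + q) • φ (φ Z) + (p * q) • φ Z := by
    intro Z
    simp only [hφ3, map_add, map_smul]
    module
  intro X Y
  set a := htilde (φ (φ X)) (φ (φ Y)) with ha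
  set b := htilde (φ (φ X)) (φ Y) with hb
  set c := htilde (φ X) (φ (φ Y)) with hc
  set d := htilde (φ X) (φ Y) with hd
  have e1 : h X Y = a + η X * η Y := by rw [hh]
  have e2 : h (φ X) (φ Y) = p ^ 2 * a + p * q * b + p * q * c + q ^ 2 * d := by
    rw [hh, hφ3, hφ3, hηφ]
    simp [map_add, map_smul, smul_eq_mul, ha, hb, hc, hd]
    ring
  have e3 : h (φ X) Y = p * a + q * c := by
    rw [hh, hφ3, hηφ]
    simp [map_add, map_smul, smul_eq_mul, ha, hc]
  have e4 : h X (φ Y) = p * a + q * b := by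
    rw [hh, hφ3, hηφ]
    simp [map_add, map_smul, smul_eq_mul, ha, hb]
  have e5 : h (φ (φ X)) (φ (φ Y)) = (p ^ 2 + q) ^ 2 * a + (p ^ 2 + q) * (p * q) * b
      + (p * q) * (p ^ 2 + q) * c + (p * q) ^ 2 * d := by
    rw [hh, hφ4, hφ4, hηφ2]
    simp [map_add, map_smul, smul_eq_mul, ha, hb, hc, hd]
    ring
  have e6 : h (φ (φ X)) (φ Y) = p * (p ^ 2 + q) * a + q * (p ^ 2 + q) * b
      + p ^ 2 * q * c + p * q ^ 2 * d := by
    rw [hh, hφ4, hφ3, hηφ2]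
    simp [map_add, map_smul, smul_eq_mul, ha, hb, hc, hd]
    ring
  have e7 : h (φ X) (φ (φ Y)) = p * (p ^ 2 + q) * a + p ^ 2 * q * b
      + q * (p ^ 2 + q) * c + p * q ^ 2 * d := by
    rw [hh, hφ3, hφ4, hηφ]
    simp [map_add, map_smul, smul_eq_mul, ha, hb, hc, hd]
    ring
  have e8 : h (φ (φ X)) Y = (p ^ 2 + q) * a + p * q * c := by
    rw [hh, hφ4, hηφ2]
    simp [map_add, map_smul, smul_eq_mul, ha, hc]
  have e9 : h X (φ (φ Y)) = (p ^ 2 + q) * a + p * q * b := by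
    rw [hh, hφ4, hηφ2]
    simp [map_add, map_smul, smul_eq_mul, ha, hb]
  rw [hg (φ X) (φ Y), hg (φ X) Y, hg X Y, e1, e2, e3, e4, e5, e6, e7, e8,
    hηφ, hηφ]
  set u := (1 : ℝ) / (α + δ) with hu'
  have hu : u * (α + δ) = 1 := by
    rw [hu']; field_simp
  linear_combination ((q * a - p * q * b - q ^ 2 * d) * u) * hconst
    - (q * η X * η Y) * hu
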